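/- Let (W, S) be a Coxeter system and let s₁, …, sₙ be a sequence of simple reflections that is not reduced. Let j be the maximal index such that s₁ ⋯ s_j is reduced. Then there exists a unique index j' < j such that s_{j'} ⋯ s_j = s_{j'+1} ⋯ s_{j+1} in W; consequently s₁ ⋯ sₙ = s₁ ⋯ ŝ_{j'} ⋯ ŝ_{j+1} ⋯ sₙ (omitting the letters at positions j' and j+1). -/

import Mathlib

/-!
STATEMENT 0 (Coxeter deletion property).
Let `(W, S)` be a Coxeter system and `l` a word in the simple reflections which is
not reduced.  Let `j` be the maximal index such that the prefix consisting of the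
first `j` letters is reduced (equivalently, `l.take j` is reduced and
`l.take (j+1)` is not).  Then there is a unique index `j' < j` such that
`s_{j'} ⋯ s_{j-1} = s_{j'+1} ⋯ s_j` (0-based indexing), and for this `j'`,
deleting the letters at positions `j'` and `j` does not change the product.
-/

namespace CoxDel
open CoxeterSystem List
set_option linter.unusedSectionVars false
set_option linter.unusedVariables false
variable {B : Type*} {W : Type*} [Group W] [DecidableEq W]
  {M : CoxeterMatrix B} (cs : CoxeterSystem M W)


/-- The sign-representation generator. -/
def sigma (i : B) : Function.End (W × ℤˣ) :=
  fun p => (cs.simple i * p.1 * cs.simple i, if p.1 = cs.simple i then -p.2 else p.2)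

lemma end_mul_apply (f g : Function.End (W × ℤˣ)) (x : W × ℤˣ) : (f * g) x = f (g x) := rfl

lemma prod_sigma_apply (ω : List B) (p : W × ℤˣ) :
    (List.prod (ω.map (sigma cs))) p =
      (cs.wordProd ω * p.1 * (cs.wordProd ω)⁻¹,
        (-1) ^ ((cs.leftInvSeq ω).count (cs.wordProd ω * p.1 * (cs.wordProd ω)⁻¹)) * p.2) := by
  induction ω generalizing p with
  | nil =>
    show (1 : Function.End (W × ℤˣ)) p = _
    simp [leftInvSeq]
    rfl
  | cons i ω ih =>
    rw [List.map_cons, List.prod_cons, end_mul_apply, ih p]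
    set u := cs.wordProd ω with hu
    have hw : cs.wordProd (i :: ω) = cs.simple i * u := cs.wordProd_cons i ω
    have hconj : cs.wordProd (i :: ω) * p.1 * (cs.wordProd (i :: ω))⁻¹
        = cs.simple i * (u * p.1 * u⁻¹) * cs.simple i := by
      rw [hw]; simp [mul_inv_rev, cs.inv_simple, mul_assoc]
    have hlis : cs.leftInvSeq (i :: ω)
        = cs.simple i :: List.map (⇑(MulAut.conj (cs.simple i))) (cs.leftInvSeq ω) := rfl
    have hiff : cs.simple i * (u * p.1 * u⁻¹) * cs.simple i = cs.simple i ↔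
        u * p.1 * u⁻¹ = cs.simple i := by
      constructor
      · intro h
        have h2 := congrArg (fun x => cs.simple i * x * cs.simple i) h
        simp only [mul_assoc] at h2
        simpa [cs.simple_mul_simple_cancel_left, cs.simple_mul_simple_self, mul_assoc,
          ← mul_assoc] using h2
      · intro h; rw [h, cs.simple_mul_simple_self, one_mul]
    have hcount : (cs.leftInvSeq (i :: ω)).count
          (cs.simple i * (u * p.1 * u⁻¹) * cs.simple i)
        = (cs.leftInvSeq ω).count (u * p.1 * u⁻¹)
          + (if u * p.1 * u⁻¹ = cs.simple i then 1 else 0) := by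
      rw [hlis, List.count_cons]
      congr 1
      · have hinj : Function.Injective (⇑(MulAut.conj (cs.simple i))) :=
          (MulAut.conj (cs.simple i)).injective
        have : cs.simple i * (u * p.1 * u⁻¹) * cs.simple i
            = (MulAut.conj (cs.simple i)) (u * p.1 * u⁻¹) := by
          simp [MulAut.conj_apply, cs.inv_simple, mul_assoc]
        rw [this, List.count_map_of_injective _ _ hinj]
      · simp only [beq_iff_eq]
        by_cases h : u * p.1 * u⁻¹ = cs.simple i
        · rw [if_pos (hiff.mpr h).symm, if_pos h]
        · rw [if_neg (fun hc => h (hiff.mp hc.symm)), if_neg h]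
    show sigma cs i _ = _
    rw [sigma]
    simp only [hconj, hcount]
    refine Prod.ext rfl ?_
    dsimp only
    by_cases h : u * p.1 * u⁻¹ = cs.simple i
    · rw [if_pos h, if_pos h, pow_add, pow_one]
      rw [mul_neg_one, neg_mul]
    · rw [if_neg h, if_neg h, add_zero]




lemma alternatingWord_two_mul_succ (i i' : B) (m : ℕ) :
    CoxeterSystem.alternatingWord i i' (2 * (m + 1))
      = i :: i' :: CoxeterSystem.alternatingWord i i' (2 * m) := by
  have h1 : 2 * (m + 1) = (2 * m + 1) + 1 := by ring
  rw [h1, CoxeterSystem.alternatingWord_succ', CoxeterSystem.alternatingWord_succ']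
  have : ¬ Even (2 * m + 1) := by simp [Nat.even_add_one]
  rw [if_neg this, if_pos (even_two_mul m)]

lemma prod_map_alternatingWord {N : Type*} [Monoid N] (f : B → N) (i i' : B) (m : ℕ) :
    ((CoxeterSystem.alternatingWord i i' (2 * m)).map f).prod = (f i * f i') ^ m := by
  induction m with
  | zero => simp [CoxeterSystem.alternatingWord]
  | succ m ih =>
    rw [alternatingWord_two_mul_succ, List.map_cons, List.map_cons, List.prod_cons,
      List.prod_cons, ih, pow_succ']
    rw [mul_assoc]

lemma lis_alternatingWord (i i' : B) (m : ℕ) :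
    cs.leftInvSeq (CoxeterSystem.alternatingWord i i' (2 * m)) =
      (List.range (2 * m)).map
        (fun r => (cs.simple i * cs.simple i') ^ r * cs.simple i) := by
  set p := cs.simple i * cs.simple i' with hp
  have hap : SemiconjBy (cs.simple i) p⁻¹ p := by
    show cs.simple i * p⁻¹ = p * cs.simple i
    rw [hp]
    simp [mul_inv_rev, cs.inv_simple, mul_assoc, cs.simple_mul_simple_cancel_left]
  have hap' : SemiconjBy (cs.simple i') p p⁻¹ := by
    show cs.simple i' * p = p⁻¹ * cs.simple i'
    rw [hp]
    simp [mul_inv_rev, cs.inv_simple, mul_assoc, cs.simple_mul_simple_cancel_left]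
  have key : ∀ r : ℕ, cs.simple i * (cs.simple i' * ((p ^ r * cs.simple i)
      * (cs.simple i')⁻¹)) * (cs.simple i)⁻¹ = p ^ (r + 2) * cs.simple i := by
    intro r
    have h1 : cs.simple i * (p⁻¹) ^ r = p ^ r * cs.simple i := hap.pow_right r
    have h2 : cs.simple i' * p ^ r = (p⁻¹) ^ r * cs.simple i' := hap'.pow_right r
    rw [cs.inv_simple, cs.inv_simple]
    calc cs.simple i * (cs.simple i' * ((p ^ r * cs.simple i) * cs.simple i')) * cs.simple i
        = cs.simple i * ((cs.simple i' * p ^ r) * (cs.simple i * cs.simple i')) * cs.simple i := by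
          simp only [mul_assoc]
      _ = cs.simple i * (((p⁻¹) ^ r * cs.simple i') * (cs.simple i * cs.simple i'))
            * cs.simple i := by rw [h2]
      _ = (cs.simple i * (p⁻¹) ^ r)
            * (cs.simple i' * (cs.simple i * (cs.simple i' * cs.simple i))) := by
          simp only [mul_assoc]
      _ = (p ^ r * cs.simple i)
            * (cs.simple i' * (cs.simple i * (cs.simple i' * cs.simple i))) := by rw [h1]
      _ = p ^ r * (p ^ 2 * cs.simple i) := by
          rw [hp, pow_two]; simp only [mul_assoc]
      _ = p ^ (r + 2) * cs.simple i := by rw [pow_add, mul_assoc]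
  induction m with
  | zero => simp [CoxeterSystem.alternatingWord]
  | succ m ih =>
    rw [alternatingWord_two_mul_succ]
    have hlis2 : cs.leftInvSeq (i :: i' :: CoxeterSystem.alternatingWord i i' (2 * m))
        = cs.simple i :: ((MulAut.conj (cs.simple i)) (cs.simple i')) ::
          List.map ((⇑(MulAut.conj (cs.simple i))) ∘ (⇑(MulAut.conj (cs.simple i'))))
            (cs.leftInvSeq (CoxeterSystem.alternatingWord i i' (2 * m))) := by
      show CoxeterSystem.leftInvSeq _ _ = _
      rw [CoxeterSystem.leftInvSeq, CoxeterSystem.leftInvSeq]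
      simp [List.map_map]
    have hrange : List.range (2 * (m + 1)) = 0 :: 1 :: List.map (· + 2) (List.range (2 * m)) := by
      have h1 : 2 * (m + 1) = (2 * m + 1) + 1 := by ring
      rw [h1, List.range_succ_eq_map, List.range_succ_eq_map]
      simp [List.map_map, Function.comp_def, Nat.succ_eq_add_one]
    rw [hlis2, ih, hrange, List.map_cons, List.map_cons]
    simp only [List.map_map]
    congr 1
    · rw [pow_zero, one_mul]
    congr 1
    · rw [MulAut.conj_apply, pow_one, hp, cs.inv_simple, mul_assoc]
    refine List.map_congr_left fun r _ => ?_
    simp only [Function.comp_apply, MulAut.conj_apply, cs.inv_simple]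
    have := key r
    rw [cs.inv_simple, cs.inv_simple] at this
    simpa [mul_assoc] using this

lemma isLiftable : M.IsLiftable (sigma cs) := by
  intro i i'
  set m := M i i' with hm
  have hpow : (cs.simple i * cs.simple i') ^ m = 1 := cs.simple_mul_simple_pow i i'
  rw [← prod_map_alternatingWord (sigma cs) i i' m]
  funext q
  rw [prod_sigma_apply]
  have hπ : cs.wordProd (CoxeterSystem.alternatingWord i i' (2 * m)) = 1 := by
    show ((CoxeterSystem.alternatingWord i i' (2 * m)).map cs.simple).prod = 1
    rw [prod_map_alternatingWord cs.simple i i' m, hpow]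
  rw [hπ]
  simp only [one_mul, inv_one, mul_one]
  have hcount : Even (((cs.leftInvSeq (CoxeterSystem.alternatingWord i i' (2 * m))).count q.1)) := by
    rw [lis_alternatingWord cs i i' m, two_mul, List.range_add, List.map_append,
      List.count_append, List.map_map]
    have : ((fun r => (cs.simple i * cs.simple i') ^ r * cs.simple i) ∘ fun x => m + x)
        = fun r => (cs.simple i * cs.simple i') ^ r * cs.simple i := by
      funext r
      simp only [Function.comp_apply, pow_add, hpow, one_mul]
    rw [this]
    exact ⟨_, rfl⟩
  rw [hcount.neg_one_pow, one_mul]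
  show q = (q.1, q.2)
  rfl

lemma count_lis_parity {ω ω' : List B} (h : cs.wordProd ω = cs.wordProd ω') (t : W) :
    ((-1 : ℤˣ)) ^ ((cs.leftInvSeq ω).count t) = (-1) ^ ((cs.leftInvSeq ω').count t) := by
  set φ := cs.lift ⟨sigma cs, isLiftable cs⟩ with hφ
  have e : ∀ ψ : List B, (ψ.map (sigma cs)).prod = φ (cs.wordProd ψ) := by
    intro ψ
    induction ψ with
    | nil => simp [hφ]
    | cons a ψ ih =>
      rw [List.map_cons, List.prod_cons, ih, cs.wordProd_cons, map_mul, hφ,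
        cs.lift_apply_simple]
  have h1 : (ω.map (sigma cs)).prod = (ω'.map (sigma cs)).prod := by
    rw [e, e, h]
  have h2 := congrFun h1 ((cs.wordProd ω)⁻¹ * t * (cs.wordProd ω), 1)
  rw [prod_sigma_apply, prod_sigma_apply] at h2
  rw [← h] at h2
  have key : cs.wordProd ω * ((cs.wordProd ω)⁻¹ * t * cs.wordProd ω) * (cs.wordProd ω)⁻¹
      = t := by group
  rw [key] at h2
  have := congrArg Prod.snd h2
  simpa using this

lemma count_ris_parity {ω ω' : List B} (h : cs.wordProd ω = cs.wordProd ω') (t : W) :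
    ((-1 : ℤˣ)) ^ ((cs.rightInvSeq ω).count t) = (-1) ^ ((cs.rightInvSeq ω').count t) := by
  have h' : cs.wordProd ω.reverse = cs.wordProd ω'.reverse := by
    rw [cs.wordProd_reverse, cs.wordProd_reverse, h]
  have := count_lis_parity cs h' t
  rwa [cs.leftInvSeq_reverse, cs.leftInvSeq_reverse, List.count_reverse,
    List.count_reverse] at this

lemma simple_mem_rightInvSeq_of_descent {ω : List B} (hω : cs.IsReduced ω) {k : B}
    (h : cs.length (cs.wordProd ω * cs.simple k) < cs.length (cs.wordProd ω)) :
    cs.simple k ∈ cs.rightInvSeq ω := by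
  obtain ⟨ω', hlen, hprod⟩ := cs.exists_reduced_word (cs.wordProd ω * cs.simple k)
  have hred' : cs.IsReduced ω' := hlen
  have hπ : cs.wordProd (ω'.concat k) = cs.wordProd ω := by
    rw [cs.wordProd_concat, ← hprod, cs.simple_mul_simple_cancel_right]
  have hnot : cs.simple k ∉ cs.rightInvSeq ω' := by
    intro hmem
    have hinv := cs.isRightInversion_of_mem_rightInvSeq hred' hmem
    rw [← hprod] at hinv
    have h2 := hinv.2
    rw [cs.simple_mul_simple_cancel_right] at h2
    omega
  have hcount1 : (cs.rightInvSeq (ω'.concat k)).count (cs.simple k) = 1 := by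
    rw [cs.rightInvSeq_concat, List.concat_eq_append, List.count_append]
    have hval : cs.simple k = (MulAut.conj (cs.simple k)) (cs.simple k) := by
      simp [MulAut.conj_apply, cs.inv_simple, cs.simple_mul_simple_cancel_right]
    have hmapcount := List.count_map_of_injective (cs.rightInvSeq ω')
      (⇑(MulAut.conj (cs.simple k))) (MulAut.conj (cs.simple k)).injective (cs.simple k)
    rw [← hval] at hmapcount
    rw [hmapcount, List.count_eq_zero_of_not_mem hnot]
    simp
  have hpar := count_ris_parity cs hπ (cs.simple k)
  rw [hcount1, pow_one] at hpar
  by_contra hmem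
  rw [List.count_eq_zero_of_not_mem hmem, pow_zero] at hpar
  exact (by decide : ((-1 : ℤˣ)) ≠ 1) hpar


end CoxDel

open CoxeterSystem

theorem coxeter_deletion_property {B : Type*} {W : Type*} [Group W]
    {M : CoxeterMatrix B} (cs : CoxeterSystem M W)
    (l : List B) (hl : ¬ cs.IsReduced l)
    (j : ℕ) (hj₁ : cs.IsReduced (l.take j)) (hj₂ : ¬ cs.IsReduced (l.take (j + 1))) :
    (∃! j' : ℕ, j' < j ∧
        cs.wordProd ((l.drop j').take (j - j')) =
          cs.wordProd ((l.drop (j' + 1)).take (j - j'))) ∧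
    (∀ j' : ℕ, j' < j →
        cs.wordProd ((l.drop j').take (j - j')) =
          cs.wordProd ((l.drop (j' + 1)).take (j - j')) →
        cs.wordProd l = cs.wordProd ((l.eraseIdx j).eraseIdx j')) := by
  classical
  -- basic setup
  have hjl : j < l.length := by
    by_contra hc
    push_neg at hc
    rw [List.take_of_length_le hc] at hj₁
    rw [List.take_of_length_le (by omega)] at hj₂
    exact hj₂ hj₁
  set ω := l.take j with hω
  have hωlen : ω.length = j := by
    rw [hω, List.length_take]
    omega
  set k := l[j] with hk
  have htake1 : l.take (j + 1) = ω ++ [k] := by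
    rw [List.take_succ, List.getElem?_eq_getElem hjl]
    rfl
  have hπtake1 : cs.wordProd (l.take (j + 1)) = cs.wordProd ω * cs.simple k := by
    rw [htake1, cs.wordProd_append, cs.wordProd_singleton]
  -- the descent
  have hlw : cs.length (cs.wordProd ω) = j := by
    have := hj₁
    rwa [CoxeterSystem.IsReduced, hωlen] at this
  have hdesc : cs.length (cs.wordProd ω * cs.simple k) < cs.length (cs.wordProd ω) := by
    have hne : cs.length (cs.wordProd ω * cs.simple k) ≠ j + 1 := by
      intro hc
      apply hj₂
      rw [CoxeterSystem.IsReduced, hπtake1, hc, List.length_take]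
      omega
    rcases cs.length_mul_simple (cs.wordProd ω) k with h | h
    · omega
    · omega
  -- the key equivalence
  have hequiv : ∀ j' : ℕ, j' < j →
      ((cs.wordProd ((l.drop j').take (j - j')) =
          cs.wordProd ((l.drop (j' + 1)).take (j - j'))) ↔
        (cs.rightInvSeq ω).getD j' 1 = cs.simple k) := by
    intro j' hj'
    have hA : (l.drop j').take (j - j') = ω.drop j' := List.drop_take.symm
    have hB : (l.drop (j' + 1)).take (j - j') = ω.drop (j' + 1) ++ [k] := by
      have h1 : (l.take (j + 1)).drop (j' + 1) = (l.drop (j' + 1)).take (j + 1 - (j' + 1)) :=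
        List.drop_take
      have h2 : j + 1 - (j' + 1) = j - j' := by omega
      rw [h2] at h1
      rw [← h1, htake1, List.drop_append_of_le_length (by omega)]
    have hj'ω : j' < ω.length := by omega
    have hdropc : ω.drop j' = ω[j'] :: ω.drop (j' + 1) := List.drop_eq_getElem_cons hj'ω
    have hgetD : (cs.rightInvSeq ω).getD j' 1 =
        (cs.wordProd (ω.drop (j' + 1)))⁻¹ * cs.simple ω[j'] * cs.wordProd (ω.drop (j' + 1)) := by
      rw [cs.getD_rightInvSeq, List.getElem?_eq_getElem hj'ω]
      rfl
    rw [hA, hB, hdropc, cs.wordProd_cons, cs.wordProd_append, cs.wordProd_singleton, hgetD]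
    set d := cs.wordProd (ω.drop (j' + 1))
    constructor
    · intro h
      rw [mul_assoc, inv_mul_eq_iff_eq_mul, h]
    · intro h
      rw [mul_assoc, inv_mul_eq_iff_eq_mul] at h
      rw [h]
  -- existence
  have hmem : cs.simple k ∈ cs.rightInvSeq ω :=
    CoxDel.simple_mem_rightInvSeq_of_descent cs hj₁ hdesc
  obtain ⟨n, hn, hneq⟩ := List.getElem_of_mem hmem
  have hrislen : (cs.rightInvSeq ω).length = j := by rw [cs.length_rightInvSeq, hωlen]
  have hnj : n < j := by omega
  have hnodup := hj₁.nodup_rightInvSeq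
  refine ⟨⟨n, ⟨hnj, (hequiv n hnj).mpr (by rw [List.getD_eq_getElem _ _ hn, hneq])⟩, ?_⟩, ?_⟩
  · rintro y ⟨hy, hyeq⟩
    have h1 := (hequiv y hy).mp hyeq
    have hyl : y < (cs.rightInvSeq ω).length := by omega
    rw [List.getD_eq_getElem _ _ hyl] at h1
    have h2 : (cs.rightInvSeq ω)[y] = (cs.rightInvSeq ω)[n] := by rw [h1, hneq]
    exact (hnodup.getElem_inj_iff).mp h2
  · intro j' hj' hP
    have hgd := (hequiv j' hj').mp hP
    have hw1 : cs.wordProd ω * cs.simple k = cs.wordProd (ω.eraseIdx j') := by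
      rw [← hgd]
      exact cs.wordProd_mul_getD_rightInvSeq ω j'
    have hsplit : l = l.take (j + 1) ++ l.drop (j + 1) := (List.take_append_drop _ _).symm
    have herase : (l.eraseIdx j).eraseIdx j' = ω.eraseIdx j' ++ l.drop (j + 1) := by
      rw [List.eraseIdx_eq_take_drop_succ l j, ← hω,
        List.eraseIdx_append_of_lt_length (by omega)]
    calc cs.wordProd l = cs.wordProd (l.take (j + 1)) * cs.wordProd (l.drop (j + 1)) := by
          nth_rewrite 1 [hsplit]
          rw [cs.wordProd_append]
      _ = cs.wordProd (ω.eraseIdx j') * cs.wordProd (l.drop (j + 1)) := by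
          rw [hπtake1, hw1]
      _ = cs.wordProd ((l.eraseIdx j).eraseIdx j') := by
          rw [herase, cs.wordProd_append]
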